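/- The function h : 2^{X,Y,Z,U} → ℝ≥0 obtained as follows is a polymatroid but the conditional function W ↦ h(W∪{U}) − h({U}) restricted to subsets of {X,Y,Z} is not entropic: let h be the entropy of the mixture where U is uniform on {0,1}, and conditioned on U=0 the variables (X,Y,Z) are distributed as the parity distribution (uniform on triples in {0,1}³ with X⊕Y⊕Z=0), and conditioned on U=1 as an independent copy pair giving entropy 2·(parity entropy). Then the conditional entropy function satisfies h(W|U) = (3/2)·h_parity(W) for all W ⊆ {X,Y,Z}, and (3/2)·h_parity is not entropic. -/

import Mathlib

/-- Shannon entropy (base 2) of the pushforward of `p` along `f`. -/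
noncomputable def mEntropy {Ω α : Type*} [Fintype Ω] [DecidableEq α]
    (p : Ω → ℝ) (f : Ω → α) : ℝ :=
  ∑ a ∈ Finset.univ.image f,
    Real.negMulLog (∑ ω ∈ Finset.univ.filter (fun ω => f ω = a), p ω) / Real.log 2

/-- The entropy function of joint random variables `X` under the distribution `p`. -/
noncomputable def entFn {V Ω D : Type*} [Fintype V] [DecidableEq V] [Fintype Ω]
    [DecidableEq D] (p : Ω → ℝ) (X : V → Ω → D) (S : Finset V) : ℝ :=
  mEntropy p (fun ω => fun v : {v // v ∈ S} => X v.1 ω)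

/-- `g` is entropic if it is the entropy function of a joint distribution of
finitely-valued random variables indexed by `V`. -/
def IsEntropic {V : Type*} [Fintype V] [DecidableEq V] (g : Finset V → ℝ) : Prop :=
  ∃ (m : ℕ) (p : Fin m → ℝ) (X : V → Fin m → ℕ),
    (∀ i, 0 ≤ p i) ∧ (∑ i, p i = 1) ∧ ∀ S, g S = entFn p X S

/-- A polymatroid: non-negative, zero on `∅`, monotone and submodular. -/
def IsPolymatroid {V : Type*} [DecidableEq V] (h : Finset V → ℝ) : Prop :=
  h ∅ = 0 ∧ (∀ X, 0 ≤ h X) ∧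
    (∀ X Y : Finset V, h X ≤ h (X ∪ Y)) ∧
    (∀ X Y : Finset V, h (X ∪ Y) + h (X ∩ Y) ≤ h X + h Y)

/-- The parity entropy function on three variables. -/
def hparity : Finset (Fin 3) → ℝ := fun S => if S = ∅ then 0 else if S.card = 1 then 1 else 2

/-- The `i`-th solution of `x ⊕ y ⊕ z = 0`, as a tuple over `Fin 3`. -/
def parityTuple (i : Fin 4) (j : Fin 3) : ℕ :=
  if j = 0 then i.val / 2 else if j = 1 then i.val % 2 else (i.val / 2 + i.val % 2) % 2

/-- The mixture distribution: `U = 0` (the `inl` branch, total mass `1/2`) yields the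
parity distribution on `(X,Y,Z)`; `U = 1` (the `inr` branch, total mass `1/2`) yields the
domain product of two independent copies of the parity distribution. -/
noncomputable def mixP : (Fin 4 ⊕ Fin 4 × Fin 4) → ℝ :=
  Sum.elim (fun _ => 1 / 8) (fun _ => 1 / 32)

/-- The four random variables `X, Y, Z` (indices `0,1,2`) and `U` (index `3`) of the
mixture: on the `inr` branch the triple `(X,Y,Z)` carries a pair of parity tuples,
encoded injectively as `2*a + b`. -/
def mixX : Fin 4 → (Fin 4 ⊕ Fin 4 × Fin 4) → ℕ := fun v ω =>
  if hv : (v : ℕ) < 3 then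
    Sum.elim (fun a => parityTuple a ⟨v, hv⟩)
      (fun ab => 2 * parityTuple ab.1 ⟨v, hv⟩ + parityTuple ab.2 ⟨v, hv⟩) ω
  else Sum.elim (fun _ => 0) (fun _ => 1) ω


open Finset Real

variable {Ω : Type*} [Fintype Ω] {α β : Type*} [DecidableEq α] [DecidableEq β]

noncomputable def pm (p : Ω → ℝ) (f : Ω → α) (a : α) : ℝ :=
  ∑ ω ∈ Finset.univ.filter (fun ω => f ω = a), p ω

noncomputable def Sfn (p : Ω → ℝ) (f : Ω → α) : ℝ :=
  ∑ a ∈ Finset.univ.image f, Real.negMulLog (pm p f a)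

lemma mEntropy_eq (p : Ω → ℝ) (f : Ω → α) : mEntropy p f = Sfn p f / Real.log 2 := by
  simp [mEntropy, Sfn, pm, Finset.sum_div]

lemma pm_nonneg {p : Ω → ℝ} (hp : ∀ ω, 0 ≤ p ω) (f : Ω → α) (a : α) : 0 ≤ pm p f a :=
  Finset.sum_nonneg fun ω _ => hp ω

lemma le_pm {p : Ω → ℝ} (hp : ∀ ω, 0 ≤ p ω) (f : Ω → α) (ω : Ω) : p ω ≤ pm p f (f ω) :=
  Finset.single_le_sum (fun ω _ => hp ω) (by simp)

lemma pm_fiber_eq (p : Ω → ℝ) (f : Ω → α) (ω : Ω) :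
    pm p f (f ω) = ∑ ω' ∈ Finset.univ.filter (fun ω' => f ω' = f ω), p ω' := rfl

/-- key fibering lemma -/
lemma sum_pm_mul (p : Ω → ℝ) (f : Ω → α) (G : α → ℝ) :
    ∑ a ∈ Finset.univ.image f, pm p f a * G a = ∑ ω, p ω * G (f ω) := by
  rw [← Finset.sum_fiberwise_of_maps_to (g := f) (fun ω _ => Finset.mem_image_of_mem f (Finset.mem_univ ω)) (fun ω => p ω * G (f ω))]
  refine Finset.sum_congr rfl fun a _ => ?_
  rw [pm, Finset.sum_mul]
  refine Finset.sum_congr rfl fun ω hω => ?_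
  simp only [Finset.mem_filter] at hω
  rw [hω.2]

lemma sum_pm_mul' {t : Finset α} (p : Ω → ℝ) {f : Ω → α} (ht : Finset.univ.image f ⊆ t)
    (G : α → ℝ) : ∑ a ∈ t, pm p f a * G a = ∑ ω, p ω * G (f ω) := by
  rw [← sum_pm_mul p f G]
  refine (Finset.sum_subset ht fun a _ ha => ?_).symm
  have : pm p f a = 0 := by
    rw [pm]
    refine Finset.sum_eq_zero fun ω hω => ?_
    simp only [Finset.mem_filter] at hω
    exact absurd (hω.2 ▸ Finset.mem_image_of_mem f (Finset.mem_univ ω)) ha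
  simp [this]

lemma sum_pm (p : Ω → ℝ) (f : Ω → α) : ∑ a ∈ Finset.univ.image f, pm p f a = ∑ ω, p ω := by
  simpa using sum_pm_mul p f (fun _ => 1)

/-- pointwise form of entropy -/
lemma Sfn_eq_sum (p : Ω → ℝ) (f : Ω → α) :
    Sfn p f = ∑ ω, p ω * (-Real.log (pm p f (f ω))) := by
  rw [Sfn, ← sum_pm_mul p f (fun a => -Real.log (pm p f a))]
  refine Finset.sum_congr rfl fun a _ => ?_
  rw [Real.negMulLog]; ring

/-- entropy only depends on the partition -/
lemma mEntropy_congr {p : Ω → ℝ} {f : Ω → α} {g : Ω → β}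
    (h : ∀ ω ω', f ω = f ω' ↔ g ω = g ω') : mEntropy p f = mEntropy p g := by
  rw [mEntropy, mEntropy]
  refine Finset.sum_bij' (fun a ha => g ((Finset.mem_image.1 ha).choose))
    (fun b hb => f ((Finset.mem_image.1 hb).choose)) ?_ ?_ ?_ ?_ ?_
  · intro a ha
    exact Finset.mem_image_of_mem g (Finset.mem_univ _)
  · intro b hb
    exact Finset.mem_image_of_mem f (Finset.mem_univ _)
  · intro a ha
    have h1 : f (Finset.mem_image.1 ha).choose = a := (Finset.mem_image.1 ha).choose_spec.2
    set b := g (Finset.mem_image.1 ha).choose with hb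
    have hbmem : b ∈ Finset.univ.image g := Finset.mem_image_of_mem g (Finset.mem_univ _)
    have h2 : g (Finset.mem_image.1 hbmem).choose = b := (Finset.mem_image.1 hbmem).choose_spec.2
    calc f (Finset.mem_image.1 hbmem).choose
        = f (Finset.mem_image.1 ha).choose := by rw [h _ _]; exact h2
      _ = a := h1
  · intro b hb
    have h1 : g (Finset.mem_image.1 hb).choose = b := (Finset.mem_image.1 hb).choose_spec.2
    set a := f (Finset.mem_image.1 hb).choose with ha
    have hamem : a ∈ Finset.univ.image f := Finset.mem_image_of_mem f (Finset.mem_univ _)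
    have h2 : f (Finset.mem_image.1 hamem).choose = a := (Finset.mem_image.1 hamem).choose_spec.2
    calc g (Finset.mem_image.1 hamem).choose
        = g (Finset.mem_image.1 hb).choose := by rw [← h _ _]; exact h2
      _ = b := h1
  · intro a ha
    have h1 : f (Finset.mem_image.1 ha).choose = a := (Finset.mem_image.1 ha).choose_spec.2
    congr 2
    refine Finset.sum_congr (Finset.filter_congr fun ω _ => ?_) fun _ _ => rfl
    exact ⟨fun hh => (h ω _).1 (hh.trans h1.symm), fun hh => ((h ω _).2 hh).trans h1⟩

variable {Ω : Type*} [Fintype Ω] {α β : Type*} [DecidableEq α] [DecidableEq β]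

lemma pm_pos_mem {p : Ω → ℝ} {q : Ω → α} {c : α} (hc : 0 < pm p q c) :
    c ∈ Finset.univ.image q := by
  by_contra hcon
  have : pm p q c = 0 := by
    refine Finset.sum_eq_zero fun ω hω => ?_
    simp only [Finset.mem_filter, Finset.mem_univ, true_and] at hω
    exact absurd (hω ▸ Finset.mem_image_of_mem q (Finset.mem_univ ω)) hcon
  rw [this] at hc; exact lt_irrefl 0 hc

lemma funcdep {p : Ω → ℝ} (hp : ∀ ω, 0 ≤ p ω) {f : Ω → α} {e : α → β}
    (h : Sfn p (fun ω => e (f ω)) = Sfn p f) :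
    ∀ ω, 0 < p ω → pm p f (f ω) = pm p (fun ω => e (f ω)) (e (f ω)) := by
  have hle : ∀ ω : Ω, pm p f (f ω) ≤ pm p (fun ω => e (f ω)) (e (f ω)) := by
    intro ω
    refine Finset.sum_le_sum_of_subset_of_nonneg ?_ (fun ω' _ _ => hp ω')
    intro ω' hω'
    simp only [Finset.mem_filter, Finset.mem_univ, true_and] at hω' ⊢
    rw [hω']
  have hterm : ∀ ω : Ω, p ω * (-Real.log (pm p (fun ω => e (f ω)) (e (f ω)))) ≤
      p ω * (-Real.log (pm p f (f ω))) := by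
    intro ω
    rcases eq_or_lt_of_le (hp ω) with h0 | h0
    · rw [← h0]; simp
    · refine mul_le_mul_of_nonneg_left (neg_le_neg ?_) (hp ω)
      exact Real.log_le_log (lt_of_lt_of_le h0 (le_pm hp f ω)) (hle ω)
  have hsum : ∑ ω, p ω * (-Real.log (pm p (fun ω => e (f ω)) (e (f ω)))) =
      ∑ ω, p ω * (-Real.log (pm p f (f ω))) := by
    rw [← Sfn_eq_sum, ← Sfn_eq_sum]; exact h
  have heach := (Finset.sum_eq_sum_iff_of_le (fun ω _ => hterm ω)).1 hsum
  intro ω hω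
  have := heach ω (Finset.mem_univ ω)
  have hlog : Real.log (pm p f (f ω)) = Real.log (pm p (fun ω => e (f ω)) (e (f ω))) := by
    field_simp at this
    linarith
  have h1 : 0 < pm p f (f ω) := lt_of_lt_of_le hω (le_pm hp f ω)
  have h2 : 0 < pm p (fun ω => e (f ω)) (e (f ω)) := lt_of_lt_of_le h1 (hle ω)
  exact Real.log_injOn_pos (Set.mem_Ioi.2 h1) (Set.mem_Ioi.2 h2) hlog

lemma indep {p : Ω → ℝ} (hp : ∀ ω, 0 ≤ p ω) (hs : ∑ ω, p ω = 1)
    {f : Ω → α} {g : Ω → β}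
    (h : Sfn p (fun ω => (f ω, g ω)) = Sfn p f + Sfn p g) :
    ∀ a b, 0 < pm p f a → 0 < pm p g b →
      pm p (fun ω => (f ω, g ω)) (a, b) = pm p f a * pm p g b := by
  set J : Ω → α × β := fun ω => (f ω, g ω) with hJ
  set t : Finset (α × β) := (Finset.univ.image f) ×ˢ (Finset.univ.image g) with ht
  set w : α × β → ℝ := fun ab => pm p f ab.1 * pm p g ab.2 with hw
  set z : α × β → ℝ := fun ab => if 0 < w ab then pm p J ab / w ab else 0 with hz
  have hw0 : ∀ ab, 0 ≤ w ab := fun ab => mul_nonneg (pm_nonneg hp f _) (pm_nonneg hp g _)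
  have hJle : ∀ ab : α × β, pm p J ab ≤ pm p f ab.1 := by
    intro ab
    refine Finset.sum_le_sum_of_subset_of_nonneg ?_ (fun ω' _ _ => hp ω')
    intro ω' hω'
    simp only [Finset.mem_filter, Finset.mem_univ, true_and] at hω' ⊢
    rw [← hω']
  have hJle' : ∀ ab : α × β, pm p J ab ≤ pm p g ab.2 := by
    intro ab
    refine Finset.sum_le_sum_of_subset_of_nonneg ?_ (fun ω' _ _ => hp ω')
    intro ω' hω'
    simp only [Finset.mem_filter, Finset.mem_univ, true_and] at hω' ⊢
    rw [← hω']
  have hJ0 : ∀ ab, w ab = 0 → pm p J ab = 0 := by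
    intro ab hab
    rcases mul_eq_zero.1 hab with h' | h'
    · exact le_antisymm (h' ▸ hJle ab) (pm_nonneg hp J ab)
    · exact le_antisymm (h' ▸ hJle' ab) (pm_nonneg hp J ab)
  have hwz : ∀ ab, w ab * z ab = pm p J ab := by
    intro ab
    by_cases hab : 0 < w ab
    · simp only [hz, if_pos hab]
      field_simp
    · have h0 : w ab = 0 := le_antisymm (not_lt.1 hab) (hw0 ab)
      rw [h0, hJ0 ab h0, zero_mul]
  have hsubset : Finset.univ.image J ⊆ t := by
    intro ab hab
    rcases Finset.mem_image.1 hab with ⟨ω, _, rfl⟩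
    exact Finset.mem_product.2 ⟨Finset.mem_image_of_mem f (Finset.mem_univ ω),
      Finset.mem_image_of_mem g (Finset.mem_univ ω)⟩
  have hext : ∀ ab ∈ t, ab ∉ Finset.univ.image J → pm p J ab = 0 := by
    intro ab _ hab
    refine Finset.sum_eq_zero fun ω hω => ?_
    simp only [Finset.mem_filter, Finset.mem_univ, true_and] at hω
    exact absurd (hω ▸ Finset.mem_image_of_mem J (Finset.mem_univ ω)) hab
  have hsumJ : ∑ ab ∈ t, pm p J ab = 1 := by
    rw [← Finset.sum_subset hsubset hext, sum_pm, hs]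
  have hsumw : ∑ ab ∈ t, w ab = 1 := by
    rw [ht, Finset.sum_product]
    simp only [hw]
    rw [← Finset.sum_mul_sum]
    rw [sum_pm, sum_pm, hs]; norm_num
  have hcenter : ∑ ab ∈ t, w ab • z ab = 1 := by
    simp only [smul_eq_mul]
    rw [Finset.sum_congr rfl fun ab _ => hwz ab, hsumJ]
  have hSJ : ∑ ab ∈ t, Real.negMulLog (pm p J ab) = Sfn p J := by
    rw [Sfn]
    refine (Finset.sum_subset hsubset fun ab _ hab => ?_).symm
    rw [hext ab ‹_› hab]; simp
  have hprem : Real.negMulLog (∑ ab ∈ t, w ab • z ab) = ∑ ab ∈ t, w ab • Real.negMulLog (z ab) := by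
    rw [hcenter]
    simp only [Real.negMulLog_one, smul_eq_mul]
    have hterm : ∀ ab ∈ t, w ab * Real.negMulLog (z ab) =
        Real.negMulLog (pm p J ab) +
          pm p J ab * (Real.log (pm p f ab.1) + Real.log (pm p g ab.2)) := by
      intro ab _
      by_cases hab : 0 < w ab
      · have hf0 : 0 < pm p f ab.1 := by
          rcases (mul_pos_iff.1 hab) with ⟨h1, _⟩ | ⟨h1, h2⟩
          · exact h1
          · exact absurd h2 (not_lt.2 (pm_nonneg hp g _))
        have hg0 : 0 < pm p g ab.2 := by
          rcases (mul_pos_iff.1 hab) with ⟨_, h2⟩ | ⟨h1, _⟩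
          · exact h2
          · exact absurd h1 (not_lt.2 (pm_nonneg hp f _))
        simp only [hz, if_pos hab]
        rcases eq_or_lt_of_le (pm_nonneg hp J ab) with hJ0' | hJ0'
        · rw [← hJ0']; simp
        · rw [Real.negMulLog, Real.log_div (ne_of_gt hJ0') (ne_of_gt hab), hw,
            Real.log_mul (ne_of_gt hf0) (ne_of_gt hg0), Real.negMulLog]
          field_simp
          ring
      · have hw0' : w ab = 0 := le_antisymm (not_lt.1 hab) (hw0 ab)
        rw [hw0', hJ0 ab hw0']
        simp [hz, hw0']
    rw [Finset.sum_congr rfl hterm, Finset.sum_add_distrib, hSJ,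
      sum_pm_mul' p hsubset (fun ab => Real.log (pm p f ab.1) + Real.log (pm p g ab.2))]
    have hsplit : ∑ ω, p ω * (Real.log (pm p f (f ω)) + Real.log (pm p g (g ω))) +
        Sfn p f + Sfn p g = 0 := by
      rw [Sfn_eq_sum p f, Sfn_eq_sum p g, ← Finset.sum_add_distrib, ← Finset.sum_add_distrib]
      exact Finset.sum_eq_zero fun ω _ => by ring
    linarith [h]
  have hmem : ∀ ab ∈ t, z ab ∈ Set.Ici (0:ℝ) := by
    intro ab _
    simp only [hz]
    split_ifs with hab
    · exact Set.mem_Ici.2 (div_nonneg (pm_nonneg hp J ab) (le_of_lt hab))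
    · exact Set.mem_Ici.2 le_rfl
  have hjensen := (Real.strictConcaveOn_negMulLog.map_sum_eq_iff'
      (fun ab _ => hw0 ab) hsumw hmem).1 hprem
  intro a b ha hb
  have hma := pm_pos_mem ha
  have hmb := pm_pos_mem hb
  have habt : (a, b) ∈ t := Finset.mem_product.2 ⟨hma, hmb⟩
  have hwab : 0 < w (a, b) := mul_pos ha hb
  have := hjensen (a, b) habt (ne_of_gt hwab)
  rw [hcenter] at this
  simp only [hz, if_pos hwab] at this
  have := (div_eq_one_iff_eq (ne_of_gt hwab)).1 this
  exact this

lemma pm_pos_elim {Ω : Type*} [Fintype Ω] {α : Type*} [DecidableEq α] {p : Ω → ℝ}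
    (hp : ∀ ω, 0 ≤ p ω) {q : Ω → α} {c : α} (hc : 0 < pm p q c) :
    ∃ ω, 0 < p ω ∧ q ω = c := by
  obtain ⟨ω, hω, hne⟩ := Finset.exists_ne_zero_of_sum_ne_zero (ne_of_gt hc)
  simp only [Finset.mem_filter, Finset.mem_univ, true_and] at hω
  exact ⟨ω, lt_of_le_of_ne (hp ω) (Ne.symm hne), hω⟩

lemma not_entropic_main : ¬ IsEntropic (fun W : Finset (Fin 3) => 3 / 2 * hparity W) := by
  rintro ⟨m, p, X, hp, hs, hfn⟩
  have L : (0:ℝ) < Real.log 2 := Real.log_pos (by norm_num)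
  -- canonical forms
  have c0 : entFn p X ({0} : Finset (Fin 3)) = mEntropy p (fun ω => X 0 ω) := by
    refine mEntropy_congr fun ω ω' => ?_
    rw [funext_iff]
    constructor
    · intro h; exact h ⟨0, by decide⟩
    · rintro h ⟨v, hv⟩
      fin_cases v
      · exact h
      · exact absurd hv (by decide)
      · exact absurd hv (by decide)
  have c1 : entFn p X ({1} : Finset (Fin 3)) = mEntropy p (fun ω => X 1 ω) := by
    refine mEntropy_congr fun ω ω' => ?_
    rw [funext_iff]
    constructor
    · intro h; exact h ⟨1, by decide⟩
    · rintro h ⟨v, hv⟩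
      fin_cases v
      · exact absurd hv (by decide)
      · exact h
      · exact absurd hv (by decide)
  have c2 : entFn p X ({2} : Finset (Fin 3)) = mEntropy p (fun ω => X 2 ω) := by
    refine mEntropy_congr fun ω ω' => ?_
    rw [funext_iff]
    constructor
    · intro h; exact h ⟨2, by decide⟩
    · rintro h ⟨v, hv⟩
      fin_cases v
      · exact absurd hv (by decide)
      · exact absurd hv (by decide)
      · exact h
  have c01 : entFn p X ({0, 1} : Finset (Fin 3)) =
      mEntropy p (fun ω => (X 0 ω, X 1 ω)) := by
    refine mEntropy_congr fun ω ω' => ?_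
    rw [funext_iff, Prod.ext_iff]
    constructor
    · intro h; exact ⟨h ⟨0, by decide⟩, h ⟨1, by decide⟩⟩
    · rintro ⟨h1, h2⟩ ⟨v, hv⟩
      fin_cases v
      · exact h1
      · exact h2
      · exact absurd hv (by decide)
  have c02 : entFn p X ({0, 2} : Finset (Fin 3)) =
      mEntropy p (fun ω => (X 0 ω, X 2 ω)) := by
    refine mEntropy_congr fun ω ω' => ?_
    rw [funext_iff, Prod.ext_iff]
    constructor
    · intro h; exact ⟨h ⟨0, by decide⟩, h ⟨2, by decide⟩⟩
    · rintro ⟨h1, h2⟩ ⟨v, hv⟩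
      fin_cases v
      · exact h1
      · exact absurd hv (by decide)
      · exact h2
  have c12 : entFn p X ({1, 2} : Finset (Fin 3)) =
      mEntropy p (fun ω => (X 1 ω, X 2 ω)) := by
    refine mEntropy_congr fun ω ω' => ?_
    rw [funext_iff, Prod.ext_iff]
    constructor
    · intro h; exact ⟨h ⟨1, by decide⟩, h ⟨2, by decide⟩⟩
    · rintro ⟨h1, h2⟩ ⟨v, hv⟩
      fin_cases v
      · exact absurd hv (by decide)
      · exact h1
      · exact h2
  have c012 : entFn p X ({0, 1, 2} : Finset (Fin 3)) =
      mEntropy p (fun ω => (X 0 ω, X 1 ω, X 2 ω)) := by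
    refine mEntropy_congr fun ω ω' => ?_
    rw [funext_iff]
    simp only [Prod.ext_iff]
    constructor
    · intro h; exact ⟨h ⟨0, by decide⟩, h ⟨1, by decide⟩, h ⟨2, by decide⟩⟩
    · rintro ⟨h1, h2, h3⟩ ⟨v, hv⟩
      fin_cases v
      · exact h1
      · exact h2
      · exact h3
  -- values
  have val : ∀ (S : Finset (Fin 3)) {γ : Type} [DecidableEq γ] {f : (Fin m) → γ}
      (hc : entFn p X S = mEntropy p f) (r : ℝ) (hr : 3 / 2 * hparity S = r),
      Sfn p f = r * Real.log 2 := by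
    intro S γ _ f hc r hr
    have h1 := hfn S
    simp only at h1
    rw [hc, mEntropy_eq, hr] at h1
    field_simp at h1
    linarith
  have v0 := val {0} c0 (3/2) (by norm_num [hparity] <;> first | rfl | decide)
  have v1 := val {1} c1 (3/2) (by norm_num [hparity] <;> first | rfl | decide)
  have v2 := val {2} c2 (3/2) (by norm_num [hparity] <;> first | rfl | decide)
  have v01 := val {0,1} c01 3 (by norm_num [hparity] <;> first | rfl | decide)
  have v02 := val {0,2} c02 3 (by norm_num [hparity] <;> first | rfl | decide)
  have v12 := val {1,2} c12 3 (by norm_num [hparity] <;> first | rfl | decide)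
  have v012 := val {0,1,2} c012 3 (by norm_num [hparity] <;> first | rfl | decide)
  -- independence
  have i01 := indep hp hs (f := fun ω => X 0 ω) (g := fun ω => X 1 ω)
    (by rw [v01, v0, v1]; ring)
  have i02 := indep hp hs (f := fun ω => X 0 ω) (g := fun ω => X 2 ω)
    (by rw [v02, v0, v2]; ring)
  have i12 := indep hp hs (f := fun ω => X 1 ω) (g := fun ω => X 2 ω)
    (by rw [v12, v1, v2]; ring)
  -- functional dependence of pairs on the triple
  have d01 := funcdep hp (f := fun ω => (X 0 ω, X 1 ω, X 2 ω)) (e := fun t => (t.1, t.2.1))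
    (by show Sfn p (fun ω => (X 0 ω, X 1 ω)) = _; rw [v01, v012])
  have d02 := funcdep hp (f := fun ω => (X 0 ω, X 1 ω, X 2 ω)) (e := fun t => (t.1, t.2.2))
    (by show Sfn p (fun ω => (X 0 ω, X 2 ω)) = _; rw [v02, v012])
  have d12 := funcdep hp (f := fun ω => (X 0 ω, X 1 ω, X 2 ω)) (e := fun t => (t.2.1, t.2.2))
    (by show Sfn p (fun ω => (X 1 ω, X 2 ω)) = _; rw [v12, v012])
  -- all positive masses are equal
  have key : ∀ x y, 0 < pm p (fun ω => X 0 ω) x → 0 < pm p (fun ω => X 1 ω) y →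
      pm p (fun ω => X 0 ω) x = pm p (fun ω => X 1 ω) y := by
    intro x y hx hy
    have h12 : 0 < pm p (fun ω => (X 0 ω, X 1 ω)) (x, y) := by
      rw [i01 x y hx hy]; exact mul_pos hx hy
    obtain ⟨ω, hpω, hωeq⟩ := pm_pos_elim hp h12
    have hωx : X 0 ω = x := congrArg Prod.fst hωeq
    have hωy : X 1 ω = y := congrArg Prod.snd hωeq
    obtain ⟨z, hz⟩ : ∃ z, z = X 2 ω := ⟨_, rfl⟩
    have hzpos : 0 < pm p (fun ω => X 2 ω) z := by
      rw [hz]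
      exact lt_of_lt_of_le hpω (le_pm hp (fun ω => X 2 ω) ω)
    have hT01 : pm p (fun ω => (X 0 ω, X 1 ω, X 2 ω)) (X 0 ω, X 1 ω, X 2 ω) =
        pm p (fun ω => (X 0 ω, X 1 ω)) (x, y) := by
      rw [← hωx, ← hωy]
      have h := d01 ω hpω
      simp only at h
      exact h
    have hT02 : pm p (fun ω => (X 0 ω, X 1 ω, X 2 ω)) (X 0 ω, X 1 ω, X 2 ω) =
        pm p (fun ω => (X 0 ω, X 2 ω)) (x, z) := by
      rw [← hωx, hz]
      have h := d02 ω hpω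
      simp only at h
      exact h
    have hT12 : pm p (fun ω => (X 0 ω, X 1 ω, X 2 ω)) (X 0 ω, X 1 ω, X 2 ω) =
        pm p (fun ω => (X 1 ω, X 2 ω)) (y, z) := by
      rw [← hωy, hz]
      have h := d12 ω hpω
      simp only at h
      exact h
    have e1 : pm p (fun ω => X 0 ω) x * pm p (fun ω => X 1 ω) y =
        pm p (fun ω => X 0 ω) x * pm p (fun ω => X 2 ω) z := by
      rw [← i01 x y hx hy, ← i02 x z hx hzpos, ← hT01, ← hT02]
    have e2 : pm p (fun ω => X 0 ω) x * pm p (fun ω => X 1 ω) y =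
        pm p (fun ω => X 1 ω) y * pm p (fun ω => X 2 ω) z := by
      rw [← i01 x y hx hy, ← i12 y z hy hzpos, ← hT01, ← hT12]
    have eyz : pm p (fun ω => X 1 ω) y = pm p (fun ω => X 2 ω) z :=
      mul_left_cancel₀ (ne_of_gt hx) e1
    have exz : pm p (fun ω => X 0 ω) x = pm p (fun ω => X 2 ω) z := by
      rw [eyz] at e2
      exact mul_right_cancel₀ (ne_of_gt hzpos) e2
    rw [exz, eyz]
  -- X 0 is uniform on its support
  obtain ⟨b, hbmem, hbne⟩ : ∃ b ∈ Finset.univ.image (fun ω => X 1 ω),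
      pm p (fun ω => X 1 ω) b ≠ 0 := by
    apply Finset.exists_ne_zero_of_sum_ne_zero
    rw [sum_pm, hs]; norm_num
  have hb : 0 < pm p (fun ω => X 1 ω) b :=
    lt_of_le_of_ne (pm_nonneg hp _ b) (Ne.symm hbne)
  set q : ℝ := pm p (fun ω => X 1 ω) b with hq
  classical
  set supp := (Finset.univ.image (fun ω => X 0 ω)).filter
    (fun a => 0 < pm p (fun ω => X 0 ω) a) with hsupp
  have hall : ∀ a ∈ supp, pm p (fun ω => X 0 ω) a = q := by
    intro a ha
    rw [hsupp, Finset.mem_filter] at ha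
    exact key a b ha.2 hb
  have hzero : ∀ a ∈ Finset.univ.image (fun ω => X 0 ω), a ∉ supp →
      pm p (fun ω => X 0 ω) a = 0 := by
    intro a ha hna
    rw [hsupp, Finset.mem_filter] at hna
    push_neg at hna
    exact le_antisymm (hna ha) (pm_nonneg hp _ a)
  set n := supp.card with hn
  have hnq : (n : ℝ) * q = 1 := by
    have h1 : ∑ a ∈ Finset.univ.image (fun ω => X 0 ω), pm p (fun ω => X 0 ω) a = 1 := by
      rw [sum_pm, hs]
    rw [← Finset.sum_filter_add_sum_filter_not (Finset.univ.image (fun ω => X 0 ω))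
      (fun a => 0 < pm p (fun ω => X 0 ω) a)] at h1
    have h2 : ∑ a ∈ (Finset.univ.image (fun ω => X 0 ω)).filter
        (fun a => ¬ 0 < pm p (fun ω => X 0 ω) a), pm p (fun ω => X 0 ω) a = 0 := by
      refine Finset.sum_eq_zero fun a ha => ?_
      rw [Finset.mem_filter] at ha
      exact le_antisymm (not_lt.1 ha.2) (pm_nonneg hp _ a)
    rw [h2, add_zero] at h1
    rw [← h1, Finset.sum_congr rfl hall, Finset.sum_const, nsmul_eq_mul]
  have hq0 : 0 < q := hb
  have hn0 : (0:ℝ) < n := by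
    rcases Nat.eq_zero_or_pos n with h | h
    · rw [h] at hnq; norm_num at hnq
    · exact_mod_cast h
  have hSA : Sfn p (fun ω => X 0 ω) = (n : ℝ) * Real.negMulLog q := by
    rw [Sfn, ← Finset.sum_filter_add_sum_filter_not (Finset.univ.image (fun ω => X 0 ω))
      (fun a => 0 < pm p (fun ω => X 0 ω) a)]
    have h2 : ∑ a ∈ (Finset.univ.image (fun ω => X 0 ω)).filter
        (fun a => ¬ 0 < pm p (fun ω => X 0 ω) a),
        Real.negMulLog (pm p (fun ω => X 0 ω) a) = 0 := by
      refine Finset.sum_eq_zero fun a ha => ?_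
      rw [Finset.mem_filter] at ha
      rw [le_antisymm (not_lt.1 ha.2) (pm_nonneg hp _ a)]
      simp
    rw [h2, add_zero, Finset.sum_congr rfl (fun a ha => by rw [hall a ha]),
      Finset.sum_const, nsmul_eq_mul]
  have hlogq : Real.log q = - Real.log n := by
    have : q = 1 / (n:ℝ) := by field_simp at hnq ⊢; linarith
    rw [this, one_div, Real.log_inv]
  have hfin : Real.log ((n:ℝ)^2) = Real.log 8 := by
    have h3 : (n:ℝ) * (- q * Real.log q) = 3/2 * Real.log 2 := by
      rw [← Real.negMulLog, ← hSA, v0]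
    rw [hlogq] at h3
    have h4 : (n:ℝ) * q * Real.log n = 3/2 * Real.log 2 := by ring_nf; ring_nf at h3; linarith
    rw [hnq, one_mul] at h4
    rw [Real.log_pow, show ((8:ℝ)) = 2^3 by norm_num, Real.log_pow]
    push_cast
    linarith
  have hn8 : (n:ℝ)^2 = 8 := by
    have := Real.log_injOn_pos (Set.mem_Ioi.2 (by positivity)) (Set.mem_Ioi.2 (by norm_num)) hfin
    exact this
  have hn8' : n^2 = 8 := by exact_mod_cast hn8
  rcases le_or_gt n 2 with h | h
  · have := Nat.pow_le_pow_left h 2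
    omega
  · have : 3^2 ≤ n^2 := Nat.pow_le_pow_left h 2
    omega

def mixW : (Fin 4 ⊕ Fin 4 × Fin 4) → ℕ := Sum.elim (fun _ => 4) (fun _ => 1)
def gS (S : Finset (Fin 4)) (ω : Fin 4 ⊕ Fin 4 × Fin 4) : ℕ := ∑ v ∈ S, mixX v ω * 4^(v:ℕ)
def kN (S : Finset (Fin 4)) (a : ℕ) : ℕ :=
  ∑ ω ∈ Finset.univ.filter (fun ω => gS S ω = a), mixW ω

lemma mixP_eq : mixP = fun ω => (mixW ω : ℝ) / 32 := by
  funext ω; cases ω <;> simp [mixP, mixW] <;> norm_num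

lemma step1 (S : Finset (Fin 4))
    (hc : ∀ ω ω', (∀ v, v ∈ S → mixX v ω = mixX v ω') ↔ gS S ω = gS S ω') :
    entFn mixP mixX S = mEntropy mixP (gS S) := by
  refine mEntropy_congr fun ω ω' => ?_
  rw [funext_iff]
  rw [Subtype.forall]
  exact hc ω ω'

lemma step2 (S : Finset (Fin 4)) :
    mEntropy mixP (gS S) =
      ∑ a ∈ Finset.univ.image (gS S),
        (fun q : ℕ => Real.negMulLog ((q : ℝ) / 32) / Real.log 2) (kN S a) := by
  rw [mEntropy]
  refine Finset.sum_congr rfl fun a _ => ?_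
  simp only
  congr 1
  rw [mixP_eq, kN]
  push_cast
  rw [Finset.sum_div]

lemma step3 (S : Finset (Fin 4))
    (hc : ∀ ω ω', (∀ v, v ∈ S → mixX v ω = mixX v ω') ↔ gS S ω = gS S ω') :
    entFn mixP mixX S = ∑ q ∈ (Finset.univ.image (gS S)).image (kN S),
      ((Finset.univ.image (gS S)).filter (fun a => kN S a = q)).card •
        (Real.negMulLog ((q : ℝ) / 32) / Real.log 2) := by
  rw [step1 S hc, step2 S]
  exact Finset.sum_comp (fun q : ℕ => Real.negMulLog ((q : ℝ) / 32) / Real.log 2) (kN S)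

lemma Hpair (S : Finset (Fin 4)) (q1 q2 : ℕ) (c1 c2 : ℕ) (r : ℝ)
    (hc : ∀ ω ω', (∀ v, v ∈ S → mixX v ω = mixX v ω') ↔ gS S ω = gS S ω')
    (hne : q1 ≠ q2)
    (hQ : (Finset.univ.image (gS S)).image (kN S) = {q1, q2})
    (hc1 : ((Finset.univ.image (gS S)).filter (fun a => kN S a = q1)).card = c1)
    (hc2 : ((Finset.univ.image (gS S)).filter (fun a => kN S a = q2)).card = c2)
    (hr : (c1 : ℝ) * Real.negMulLog ((q1 : ℝ) / 32) +
        (c2 : ℝ) * Real.negMulLog ((q2 : ℝ) / 32) = r * Real.log 2) :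
    entFn mixP mixX S = r := by
  have L : (0:ℝ) < Real.log 2 := Real.log_pos (by norm_num)
  rw [step3 S hc, hQ, Finset.sum_insert (by simpa using hne), Finset.sum_singleton, hc1, hc2]
  simp only [nsmul_eq_mul]
  field_simp
  linarith [hr]

lemma Hsingle (S : Finset (Fin 4)) (q1 : ℕ) (c1 : ℕ) (r : ℝ)
    (hc : ∀ ω ω', (∀ v, v ∈ S → mixX v ω = mixX v ω') ↔ gS S ω = gS S ω')
    (hQ : (Finset.univ.image (gS S)).image (kN S) = {q1})
    (hc1 : ((Finset.univ.image (gS S)).filter (fun a => kN S a = q1)).card = c1)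
    (hr : (c1 : ℝ) * Real.negMulLog ((q1 : ℝ) / 32) = r * Real.log 2) :
    entFn mixP mixX S = r := by
  have L : (0:ℝ) < Real.log 2 := Real.log_pos (by norm_num)
  rw [step3 S hc, hQ, Finset.sum_singleton, hc1]
  simp only [nsmul_eq_mul]
  field_simp
  linarith [hr]

-- negMulLog evaluations
lemma nmlgen (m k : ℕ) (hm : m ≠ 0) :
    Real.negMulLog ((m : ℝ) / 2 ^ k) =
      (m : ℝ) / 2 ^ k * (k * Real.log 2 - Real.log m) := by
  rw [Real.negMulLog, Real.log_div (Nat.cast_ne_zero.2 hm) (by positivity), Real.log_pow]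
  ring

lemma nm16 : Real.negMulLog ((16 : ℝ) / 32) = 1 / 2 * Real.log 2 := by
  have := nmlgen 16 5 (by norm_num)
  norm_num at this ⊢
  rw [this, show (16:ℝ) = 2^4 by norm_num, Real.log_pow]
  push_cast; ring

lemma nm8 : Real.negMulLog ((8 : ℝ) / 32) = 1 / 2 * Real.log 2 := by
  have := nmlgen 8 5 (by norm_num)
  norm_num at this ⊢
  rw [this, show (8:ℝ) = 2^3 by norm_num, Real.log_pow]
  push_cast; ring

lemma nm4 : Real.negMulLog ((4 : ℝ) / 32) = 3 / 8 * Real.log 2 := by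
  have := nmlgen 4 5 (by norm_num)
  norm_num at this ⊢
  rw [this, show (4:ℝ) = 2^2 by norm_num, Real.log_pow]
  push_cast; ring

lemma nm1 : Real.negMulLog ((1 : ℝ) / 32) = 5 / 32 * Real.log 2 := by
  have := nmlgen 1 5 (by norm_num)
  norm_num at this ⊢
  rw [this]; ring

lemma nm32 : Real.negMulLog ((32 : ℝ) / 32) = 0 := by
  norm_num [Real.negMulLog]

lemma nm12 : Real.negMulLog ((12 : ℝ) / 32) =
    3 / 8 * (3 * Real.log 2 - Real.log 3) := by
  have h : (12:ℝ)/32 = (3:ℝ)/2^3 := by norm_num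
  rw [h, Real.negMulLog, Real.log_div (by norm_num) (by positivity), Real.log_pow]
  push_cast; ring

lemma nm5 : Real.negMulLog ((5 : ℝ) / 32) =
    5 / 32 * (5 * Real.log 2 - Real.log 5) := by
  rw [show (5:ℝ)/32 = (5:ℝ)/2^5 by norm_num, Real.negMulLog,
    Real.log_div (by norm_num) (by positivity), Real.log_pow]
  push_cast; ring


def c8 (S : Finset (Fin 4)) : ℤ :=
  if (3:Fin 4) ∈ S then (if S.card = 1 then 8 else if S.card = 2 then 20 else 32)
  else (if S = ∅ then 0 else if S.card = 1 then 24 else 40)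
def a8 (S : Finset (Fin 4)) : ℤ := if (3:Fin 4) ∉ S ∧ S.card = 1 then -6 else 0
def b8 (S : Finset (Fin 4)) : ℤ := if (3:Fin 4) ∉ S ∧ 2 ≤ S.card then -5 else 0
def lo3 (α : ℤ) : ℤ := min (α * 1580) (α * 1585)
def lo5 (β : ℤ) : ℤ := min (β * 2320) (β * 2330)

noncomputable def H0 (S : Finset (Fin 4)) : ℝ :=
  (c8 S : ℝ) / 8 + ((a8 S : ℝ) / 8) * (Real.log 3 / Real.log 2) +
    ((b8 S : ℝ) / 8) * (Real.log 5 / Real.log 2)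

lemma dec1 : ∀ S : Finset (Fin 4), 0 ≤ 1000 * c8 S + lo3 (a8 S) + lo5 (b8 S) := by decide
lemma dec2 : ∀ S T : Finset (Fin 4), 0 ≤ 1000 * (c8 (S ∪ T) - c8 S) +
    lo3 (a8 (S ∪ T) - a8 S) + lo5 (b8 (S ∪ T) - b8 S) := by decide
lemma dec3 : ∀ S T : Finset (Fin 4), 0 ≤ 1000 * (c8 S + c8 T - c8 (S ∪ T) - c8 (S ∩ T)) +
    lo3 (a8 S + a8 T - a8 (S ∪ T) - a8 (S ∩ T)) +
    lo5 (b8 S + b8 T - b8 (S ∪ T) - b8 (S ∩ T)) := by decide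

lemma L3_lb : (1580/1000 : ℝ) ≤ Real.log 3 / Real.log 2 := by
  have L : (0:ℝ) < Real.log 2 := Real.log_pos (by norm_num)
  rw [le_div_iff₀ L]
  have h := Real.log_le_log (by positivity) (show (2:ℝ)^79 ≤ 3^50 by norm_num)
  rw [Real.log_pow, Real.log_pow] at h
  push_cast at h
  linarith

lemma L3_ub : Real.log 3 / Real.log 2 ≤ (1585/1000 : ℝ) := by
  have L : (0:ℝ) < Real.log 2 := Real.log_pos (by norm_num)
  rw [div_le_iff₀ L]
  have h := Real.log_le_log (by positivity) (show (3:ℝ)^200 ≤ 2^317 by rw [show (317:ℕ) = 200 + 117 from rfl, pow_add]; norm_num)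
  rw [Real.log_pow, Real.log_pow] at h
  push_cast at h
  linarith

lemma L5_lb : (2320/1000 : ℝ) ≤ Real.log 5 / Real.log 2 := by
  have L : (0:ℝ) < Real.log 2 := Real.log_pos (by norm_num)
  rw [le_div_iff₀ L]
  have h := Real.log_le_log (by positivity) (show (2:ℝ)^58 ≤ 5^25 by norm_num)
  rw [Real.log_pow, Real.log_pow] at h
  push_cast at h
  linarith

lemma L5_ub : Real.log 5 / Real.log 2 ≤ (2330/1000 : ℝ) := by
  have L : (0:ℝ) < Real.log 2 := Real.log_pos (by norm_num)
  rw [div_le_iff₀ L]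
  have h := Real.log_le_log (by positivity) (show (5:ℝ)^100 ≤ 2^233 by norm_num)
  rw [Real.log_pow, Real.log_pow] at h
  push_cast at h
  linarith

lemma lin_bound (γ α β : ℤ) (h : 0 ≤ 1000 * γ + lo3 α + lo5 β) :
    0 ≤ (γ:ℝ) + (α:ℝ) * (Real.log 3 / Real.log 2) + (β:ℝ) * (Real.log 5 / Real.log 2) := by
  have h3 : ((lo3 α : ℤ) : ℝ) ≤ (α:ℝ) * (1000 * (Real.log 3 / Real.log 2)) := by
    rcases le_or_gt 0 α with hα | hα
    · have h1 : (α:ℝ) * 1580 ≤ (α:ℝ) * (1000 * (Real.log 3 / Real.log 2)) := by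
        apply mul_le_mul_of_nonneg_left _ (by exact_mod_cast hα)
        linarith [L3_lb]
      have h2 : ((lo3 α : ℤ) : ℝ) ≤ (α:ℝ) * 1580 := by
        rw [lo3]; push_cast; exact min_le_left _ _
      linarith
    · have h1 : (α:ℝ) * 1585 ≤ (α:ℝ) * (1000 * (Real.log 3 / Real.log 2)) := by
        apply mul_le_mul_of_nonpos_left _ (by exact_mod_cast (le_of_lt hα))
        linarith [L3_ub]
      have h2 : ((lo3 α : ℤ) : ℝ) ≤ (α:ℝ) * 1585 := by
        rw [lo3]; push_cast; exact min_le_right _ _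
      linarith
  have h5 : ((lo5 β : ℤ) : ℝ) ≤ (β:ℝ) * (1000 * (Real.log 5 / Real.log 2)) := by
    rcases le_or_gt 0 β with hβ | hβ
    · have h1 : (β:ℝ) * 2320 ≤ (β:ℝ) * (1000 * (Real.log 5 / Real.log 2)) := by
        apply mul_le_mul_of_nonneg_left _ (by exact_mod_cast hβ)
        linarith [L5_lb]
      have h2 : ((lo5 β : ℤ) : ℝ) ≤ (β:ℝ) * 2320 := by
        rw [lo5]; push_cast; exact min_le_left _ _
      linarith
    · have h1 : (β:ℝ) * 2330 ≤ (β:ℝ) * (1000 * (Real.log 5 / Real.log 2)) := by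
        apply mul_le_mul_of_nonpos_left _ (by exact_mod_cast (le_of_lt hβ))
        linarith [L5_ub]
      have h2 : ((lo5 β : ℤ) : ℝ) ≤ (β:ℝ) * 2330 := by
        rw [lo5]; push_cast; exact min_le_right _ _
      linarith
  have hcast : (0:ℝ) ≤ 1000 * (γ:ℝ) + ((lo3 α : ℤ):ℝ) + ((lo5 β : ℤ):ℝ) := by
    exact_mod_cast h
  linarith

lemma cases16 : ∀ S : Finset (Fin 4), S = ∅ ∨ S = {0} ∨ S = {1} ∨ S = {2} ∨ S = {3} ∨ S = {0, 1} ∨ S = {0, 2} ∨ S = {1, 2} ∨ S = {0, 3} ∨ S = {1, 3} ∨ S = {2, 3} ∨ S = {0, 1, 2} ∨ S = {0, 1, 3} ∨ S = {0, 2, 3} ∨ S = {1, 2, 3} ∨ S = {0, 1, 2, 3} := by decide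

set_option maxHeartbeats 2000000 in
lemma entFn_eq_H0 : ∀ S : Finset (Fin 4), entFn mixP mixX S = H0 S := by
  intro S
  have L : (0:ℝ) < Real.log 2 := Real.log_pos (by norm_num)
  rcases cases16 S with rfl|rfl|rfl|rfl|rfl|rfl|rfl|rfl|rfl|rfl|rfl|rfl|rfl|rfl|rfl|rfl
  · refine Hsingle ∅ 32 1 _ (by decide) (by decide) (by decide) ?_
    rw [H0, show c8 (∅ : Finset (Fin 4)) = 0 from by decide,
      show a8 (∅ : Finset (Fin 4)) = 0 from by decide,
      show b8 (∅ : Finset (Fin 4)) = 0 from by decide]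
    push_cast
    rw [nm32]
    field_simp
    try ring
  · refine Hpair {0} 12 4 2 2 _ (by decide) (by norm_num) (by decide) (by decide) (by decide) ?_
    rw [H0, show c8 ({0} : Finset (Fin 4)) = 24 from by decide,
      show a8 ({0} : Finset (Fin 4)) = -6 from by decide,
      show b8 ({0} : Finset (Fin 4)) = 0 from by decide]
    push_cast
    rw [nm12, nm4]
    field_simp
    try ring
  · refine Hpair {1} 12 4 2 2 _ (by decide) (by norm_num) (by decide) (by decide) (by decide) ?_
    rw [H0, show c8 ({1} : Finset (Fin 4)) = 24 from by decide,
      show a8 ({1} : Finset (Fin 4)) = -6 from by decide,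
      show b8 ({1} : Finset (Fin 4)) = 0 from by decide]
    push_cast
    rw [nm12, nm4]
    field_simp
    try ring
  · refine Hpair {2} 12 4 2 2 _ (by decide) (by norm_num) (by decide) (by decide) (by decide) ?_
    rw [H0, show c8 ({2} : Finset (Fin 4)) = 24 from by decide,
      show a8 ({2} : Finset (Fin 4)) = -6 from by decide,
      show b8 ({2} : Finset (Fin 4)) = 0 from by decide]
    push_cast
    rw [nm12, nm4]
    field_simp
    try ring
  · refine Hsingle {3} 16 2 _ (by decide) (by decide) (by decide) ?_
    rw [H0, show c8 ({3} : Finset (Fin 4)) = 8 from by decide,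
      show a8 ({3} : Finset (Fin 4)) = 0 from by decide,
      show b8 ({3} : Finset (Fin 4)) = 0 from by decide]
    push_cast
    rw [nm16]
    field_simp
    try ring
  · refine Hpair {0, 1} 5 1 4 12 _ (by decide) (by norm_num) (by decide) (by decide) (by decide) ?_
    rw [H0, show c8 ({0, 1} : Finset (Fin 4)) = 40 from by decide,
      show a8 ({0, 1} : Finset (Fin 4)) = 0 from by decide,
      show b8 ({0, 1} : Finset (Fin 4)) = -5 from by decide]
    push_cast
    rw [nm5, nm1]
    field_simp
    try ring
  · refine Hpair {0, 2} 5 1 4 12 _ (by decide) (by norm_num) (by decide) (by decide) (by decide) ?_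
    rw [H0, show c8 ({0, 2} : Finset (Fin 4)) = 40 from by decide,
      show a8 ({0, 2} : Finset (Fin 4)) = 0 from by decide,
      show b8 ({0, 2} : Finset (Fin 4)) = -5 from by decide]
    push_cast
    rw [nm5, nm1]
    field_simp
    try ring
  · refine Hpair {1, 2} 5 1 4 12 _ (by decide) (by norm_num) (by decide) (by decide) (by decide) ?_
    rw [H0, show c8 ({1, 2} : Finset (Fin 4)) = 40 from by decide,
      show a8 ({1, 2} : Finset (Fin 4)) = 0 from by decide,
      show b8 ({1, 2} : Finset (Fin 4)) = -5 from by decide]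
    push_cast
    rw [nm5, nm1]
    field_simp
    try ring
  · refine Hpair {0, 3} 8 4 2 4 _ (by decide) (by norm_num) (by decide) (by decide) (by decide) ?_
    rw [H0, show c8 ({0, 3} : Finset (Fin 4)) = 20 from by decide,
      show a8 ({0, 3} : Finset (Fin 4)) = 0 from by decide,
      show b8 ({0, 3} : Finset (Fin 4)) = 0 from by decide]
    push_cast
    rw [nm8, nm4]
    field_simp
    try ring
  · refine Hpair {1, 3} 8 4 2 4 _ (by decide) (by norm_num) (by decide) (by decide) (by decide) ?_
    rw [H0, show c8 ({1, 3} : Finset (Fin 4)) = 20 from by decide,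
      show a8 ({1, 3} : Finset (Fin 4)) = 0 from by decide,
      show b8 ({1, 3} : Finset (Fin 4)) = 0 from by decide]
    push_cast
    rw [nm8, nm4]
    field_simp
    try ring
  · refine Hpair {2, 3} 8 4 2 4 _ (by decide) (by norm_num) (by decide) (by decide) (by decide) ?_
    rw [H0, show c8 ({2, 3} : Finset (Fin 4)) = 20 from by decide,
      show a8 ({2, 3} : Finset (Fin 4)) = 0 from by decide,
      show b8 ({2, 3} : Finset (Fin 4)) = 0 from by decide]
    push_cast
    rw [nm8, nm4]
    field_simp
    try ring
  · refine Hpair {0, 1, 2} 5 1 4 12 _ (by decide) (by norm_num) (by decide) (by decide) (by decide) ?_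
    rw [H0, show c8 ({0, 1, 2} : Finset (Fin 4)) = 40 from by decide,
      show a8 ({0, 1, 2} : Finset (Fin 4)) = 0 from by decide,
      show b8 ({0, 1, 2} : Finset (Fin 4)) = -5 from by decide]
    push_cast
    rw [nm5, nm1]
    field_simp
    try ring
  · refine Hpair {0, 1, 3} 4 1 4 16 _ (by decide) (by norm_num) (by decide) (by decide) (by decide) ?_
    rw [H0, show c8 ({0, 1, 3} : Finset (Fin 4)) = 32 from by decide,
      show a8 ({0, 1, 3} : Finset (Fin 4)) = 0 from by decide,
      show b8 ({0, 1, 3} : Finset (Fin 4)) = 0 from by decide]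
    push_cast
    rw [nm4, nm1]
    field_simp
    try ring
  · refine Hpair {0, 2, 3} 4 1 4 16 _ (by decide) (by norm_num) (by decide) (by decide) (by decide) ?_
    rw [H0, show c8 ({0, 2, 3} : Finset (Fin 4)) = 32 from by decide,
      show a8 ({0, 2, 3} : Finset (Fin 4)) = 0 from by decide,
      show b8 ({0, 2, 3} : Finset (Fin 4)) = 0 from by decide]
    push_cast
    rw [nm4, nm1]
    field_simp
    try ring
  · refine Hpair {1, 2, 3} 4 1 4 16 _ (by decide) (by norm_num) (by decide) (by decide) (by decide) ?_
    rw [H0, show c8 ({1, 2, 3} : Finset (Fin 4)) = 32 from by decide,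
      show a8 ({1, 2, 3} : Finset (Fin 4)) = 0 from by decide,
      show b8 ({1, 2, 3} : Finset (Fin 4)) = 0 from by decide]
    push_cast
    rw [nm4, nm1]
    field_simp
    try ring
  · refine Hpair {0, 1, 2, 3} 4 1 4 16 _ (by decide) (by norm_num) (by decide) (by decide) (by decide) ?_
    rw [H0, show c8 ({0, 1, 2, 3} : Finset (Fin 4)) = 32 from by decide,
      show a8 ({0, 1, 2, 3} : Finset (Fin 4)) = 0 from by decide,
      show b8 ({0, 1, 2, 3} : Finset (Fin 4)) = 0 from by decide]
    push_cast
    rw [nm4, nm1]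
    field_simp
    try ring

lemma cases8 : ∀ W : Finset (Fin 3), W = ∅ ∨ W = {0} ∨ W = {1} ∨ W = {2} ∨ W = {0, 1} ∨ W = {0, 2} ∨ W = {1, 2} ∨ W = {0, 1, 2} := by decide

lemma part2 : ∀ W : Finset (Fin 3),
    entFn mixP mixX (W.image Fin.castSucc ∪ {3}) - entFn mixP mixX {3} =
      3 / 2 * hparity W := by
  intro W
  rw [entFn_eq_H0, entFn_eq_H0]
  rcases cases8 W with rfl|rfl|rfl|rfl|rfl|rfl|rfl|rfl
  · rw [show ((∅ : Finset (Fin 3)).image Fin.castSucc ∪ {3}) = ({3} : Finset (Fin 4)) from by decide,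
      show hparity (∅ : Finset (Fin 3)) = 0 from by simp [hparity]]
    ring
  · rw [show (({0} : Finset (Fin 3)).image Fin.castSucc ∪ {3}) = ({0, 3} : Finset (Fin 4)) from by decide,
      show hparity ({0} : Finset (Fin 3)) = 1 from by simp only [hparity]; rw [if_neg (by decide), if_pos (by decide)],
      H0, H0, show c8 ({0, 3} : Finset (Fin 4)) = 20 from by decide,
      show a8 ({0, 3} : Finset (Fin 4)) = 0 from by decide,
      show b8 ({0, 3} : Finset (Fin 4)) = 0 from by decide,
      show c8 ({3} : Finset (Fin 4)) = 8 from by decide,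
      show a8 ({3} : Finset (Fin 4)) = 0 from by decide,
      show b8 ({3} : Finset (Fin 4)) = 0 from by decide]
    norm_num
  · rw [show (({1} : Finset (Fin 3)).image Fin.castSucc ∪ {3}) = ({1, 3} : Finset (Fin 4)) from by decide,
      show hparity ({1} : Finset (Fin 3)) = 1 from by simp only [hparity]; rw [if_neg (by decide), if_pos (by decide)],
      H0, H0, show c8 ({1, 3} : Finset (Fin 4)) = 20 from by decide,
      show a8 ({1, 3} : Finset (Fin 4)) = 0 from by decide,
      show b8 ({1, 3} : Finset (Fin 4)) = 0 from by decide,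
      show c8 ({3} : Finset (Fin 4)) = 8 from by decide,
      show a8 ({3} : Finset (Fin 4)) = 0 from by decide,
      show b8 ({3} : Finset (Fin 4)) = 0 from by decide]
    norm_num
  · rw [show (({2} : Finset (Fin 3)).image Fin.castSucc ∪ {3}) = ({2, 3} : Finset (Fin 4)) from by decide,
      show hparity ({2} : Finset (Fin 3)) = 1 from by simp only [hparity]; rw [if_neg (by decide), if_pos (by decide)],
      H0, H0, show c8 ({2, 3} : Finset (Fin 4)) = 20 from by decide,
      show a8 ({2, 3} : Finset (Fin 4)) = 0 from by decide,
      show b8 ({2, 3} : Finset (Fin 4)) = 0 from by decide,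
      show c8 ({3} : Finset (Fin 4)) = 8 from by decide,
      show a8 ({3} : Finset (Fin 4)) = 0 from by decide,
      show b8 ({3} : Finset (Fin 4)) = 0 from by decide]
    norm_num
  · rw [show (({0, 1} : Finset (Fin 3)).image Fin.castSucc ∪ {3}) = ({0, 1, 3} : Finset (Fin 4)) from by decide,
      show hparity ({0, 1} : Finset (Fin 3)) = 2 from by simp only [hparity]; rw [if_neg (by decide), if_neg (by decide)],
      H0, H0, show c8 ({0, 1, 3} : Finset (Fin 4)) = 32 from by decide,
      show a8 ({0, 1, 3} : Finset (Fin 4)) = 0 from by decide,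
      show b8 ({0, 1, 3} : Finset (Fin 4)) = 0 from by decide,
      show c8 ({3} : Finset (Fin 4)) = 8 from by decide,
      show a8 ({3} : Finset (Fin 4)) = 0 from by decide,
      show b8 ({3} : Finset (Fin 4)) = 0 from by decide]
    norm_num
  · rw [show (({0, 2} : Finset (Fin 3)).image Fin.castSucc ∪ {3}) = ({0, 2, 3} : Finset (Fin 4)) from by decide,
      show hparity ({0, 2} : Finset (Fin 3)) = 2 from by simp only [hparity]; rw [if_neg (by decide), if_neg (by decide)],
      H0, H0, show c8 ({0, 2, 3} : Finset (Fin 4)) = 32 from by decide,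
      show a8 ({0, 2, 3} : Finset (Fin 4)) = 0 from by decide,
      show b8 ({0, 2, 3} : Finset (Fin 4)) = 0 from by decide,
      show c8 ({3} : Finset (Fin 4)) = 8 from by decide,
      show a8 ({3} : Finset (Fin 4)) = 0 from by decide,
      show b8 ({3} : Finset (Fin 4)) = 0 from by decide]
    norm_num
  · rw [show (({1, 2} : Finset (Fin 3)).image Fin.castSucc ∪ {3}) = ({1, 2, 3} : Finset (Fin 4)) from by decide,
      show hparity ({1, 2} : Finset (Fin 3)) = 2 from by simp only [hparity]; rw [if_neg (by decide), if_neg (by decide)],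
      H0, H0, show c8 ({1, 2, 3} : Finset (Fin 4)) = 32 from by decide,
      show a8 ({1, 2, 3} : Finset (Fin 4)) = 0 from by decide,
      show b8 ({1, 2, 3} : Finset (Fin 4)) = 0 from by decide,
      show c8 ({3} : Finset (Fin 4)) = 8 from by decide,
      show a8 ({3} : Finset (Fin 4)) = 0 from by decide,
      show b8 ({3} : Finset (Fin 4)) = 0 from by decide]
    norm_num
  · rw [show (({0, 1, 2} : Finset (Fin 3)).image Fin.castSucc ∪ {3}) = ({0, 1, 2, 3} : Finset (Fin 4)) from by decide,
      show hparity ({0, 1, 2} : Finset (Fin 3)) = 2 from by simp only [hparity]; rw [if_neg (by decide), if_neg (by decide)],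
      H0, H0, show c8 ({0, 1, 2, 3} : Finset (Fin 4)) = 32 from by decide,
      show a8 ({0, 1, 2, 3} : Finset (Fin 4)) = 0 from by decide,
      show b8 ({0, 1, 2, 3} : Finset (Fin 4)) = 0 from by decide,
      show c8 ({3} : Finset (Fin 4)) = 8 from by decide,
      show a8 ({3} : Finset (Fin 4)) = 0 from by decide,
      show b8 ({3} : Finset (Fin 4)) = 0 from by decide]
    norm_num

lemma isEntropic_congr {f g : Finset (Fin 3) → ℝ} (h : ∀ S, f S = g S) :
    IsEntropic f ↔ IsEntropic g := by
  unfold IsEntropic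
  constructor
  · rintro ⟨m, p, X, h1, h2, h3⟩
    exact ⟨m, p, X, h1, h2, fun S => by rw [← h S]; exact h3 S⟩
  · rintro ⟨m, p, X, h1, h2, h3⟩
    exact ⟨m, p, X, h1, h2, fun S => by rw [h S]; exact h3 S⟩

/-- The entropy function `h` of the mixture is a polymatroid, its conditional version
`W ↦ h(W ∪ {U}) − h({U})` equals `(3/2)·h_parity` on subsets of `{X,Y,Z}`, yet this
conditional function is not entropic. -/
theorem conditional_entropy_not_entropic :
    IsPolymatroid (fun S : Finset (Fin 4) => entFn mixP mixX S) ∧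
    (∀ W : Finset (Fin 3),
      entFn mixP mixX (W.image Fin.castSucc ∪ {3}) - entFn mixP mixX {3} =
        3 / 2 * hparity W) ∧
    ¬ IsEntropic (fun W : Finset (Fin 3) =>
        entFn mixP mixX (W.image Fin.castSucc ∪ {3}) - entFn mixP mixX {3}) ∧
    ¬ IsEntropic (fun W : Finset (Fin 3) => 3 / 2 * hparity W) := by
  refine ⟨⟨?_, ?_, ?_, ?_⟩, part2, ?_, not_entropic_main⟩
  · show entFn mixP mixX ∅ = 0
    rw [entFn_eq_H0, H0, show c8 (∅ : Finset (Fin 4)) = 0 from by decide,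
      show a8 (∅ : Finset (Fin 4)) = 0 from by decide,
      show b8 (∅ : Finset (Fin 4)) = 0 from by decide]
    norm_num
  · intro S
    show 0 ≤ entFn mixP mixX S
    rw [entFn_eq_H0, H0]
    have := lin_bound (c8 S) (a8 S) (b8 S) (dec1 S)
    linarith
  · intro S T
    show entFn mixP mixX S ≤ entFn mixP mixX (S ∪ T)
    rw [entFn_eq_H0, entFn_eq_H0, H0, H0]
    have := lin_bound (c8 (S ∪ T) - c8 S) (a8 (S ∪ T) - a8 S) (b8 (S ∪ T) - b8 S) (dec2 S T)
    push_cast at this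
    linarith
  · intro S T
    show entFn mixP mixX (S ∪ T) + entFn mixP mixX (S ∩ T) ≤
      entFn mixP mixX S + entFn mixP mixX T
    rw [entFn_eq_H0, entFn_eq_H0, entFn_eq_H0, entFn_eq_H0, H0, H0, H0, H0]
    have := lin_bound (c8 S + c8 T - c8 (S ∪ T) - c8 (S ∩ T))
      (a8 S + a8 T - a8 (S ∪ T) - a8 (S ∩ T)) (b8 S + b8 T - b8 (S ∪ T) - b8 (S ∩ T)) (dec3 S T)
    push_cast at this
    linarith
  · intro hcon
    exact not_entropic_main ((isEntropic_congr part2).1 hcon)
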